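/- There is a universal constant c₀ > 0 such that for every constant exponent a ≥ 1 the following holds for all n ≥ 2 with identifier range M = n^a: there exist a finite certificate set C with |C| ≤ 2^(c₀ · a · n) and a verification algorithm A : Fin M → Finset (Fin M) → C → Bool such that for every finite simple graph G on a vertex set V with |V| = n and every injective identifier assignment Id : V → Fin M: there exists c ∈ C with A (Id u) ({Id v : v ∈ N(u)}) c = true for every vertex u ∈ V, if and only if G is bipartite. (In particular, when the identifier range is polynomial in n, bipartiteness has a global certification scheme of size O(n), refuting the conjecture that Θ(n log n) is optimal.) -/

import Mathlib

open Finset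

lemma auxA (k : ℕ) : ∀ j : ℕ, k ^ j * (k + j) ≤ (k + 1) ^ j * k := by
  intro j
  induction j with
  | zero => simp
  | succ j ih =>
    have hle : k ^ j ≤ (k + 1) ^ j := Nat.pow_le_pow_left (by omega) j
    calc k ^ (j + 1) * (k + (j + 1)) = k * (k ^ j * (k + j) + k ^ j) := by ring
      _ ≤ k * ((k + 1) ^ j * k + (k + 1) ^ j) := Nat.mul_le_mul_left k (by omega)
      _ = (k + 1) ^ (j + 1) * k := by ring

lemma auxB (k : ℕ) : 2 * k ^ (k + 1) ≤ (k + 1) ^ (k + 1) := by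
  calc 2 * k ^ (k + 1) = k ^ k * (k + k) := by ring
    _ ≤ (k + 1) ^ k * k := auxA k k
    _ ≤ (k + 1) ^ k * (k + 1) := Nat.mul_le_mul_left _ (by omega)
    _ = (k + 1) ^ (k + 1) := by ring

lemma auxC (m K : ℕ) (hm : 1 ≤ m) : 2 ^ K * (m - 1) ^ (m * K) ≤ m ^ (m * K) := by
  obtain ⟨k, rfl⟩ : ∃ k, m = k + 1 := ⟨m - 1, by omega⟩
  have h := Nat.pow_le_pow_left (auxB k) K
  calc 2 ^ K * (k + 1 - 1) ^ ((k + 1) * K) = (2 * k ^ (k + 1)) ^ K := by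
        simp [mul_pow, ← pow_mul, mul_comm]
    _ ≤ ((k + 1) ^ (k + 1)) ^ K := h
    _ = (k + 1) ^ ((k + 1) * K) := by rw [← pow_mul]




lemma numeric (a n : ℕ) (ha : 1 ≤ a) (hn : 2 ≤ n) :
    (Nat.choose (n ^ a) n * 2 ^ n) * (2 ^ (n ^ a) - 2 ^ (n ^ a - n)) ^ (2 ^ n * (n * (2 + a * n)))
      < 2 ^ (n ^ a * (2 ^ n * (n * (2 + a * n)))) := by
  set M := n ^ a with hM
  set K := n * (2 + a * n) with hK
  set N := 2 ^ n * K with hN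
  have hMn : n ≤ M := Nat.le_self_pow (by omega) n
  -- Q bound
  have hQ : Nat.choose M n * 2 ^ n ≤ (2 * M) ^ n := by
    rw [mul_pow]
    exact Nat.mul_le_mul (Nat.choose_le_pow M n) le_rfl |>.trans (by ring_nf; exact le_rfl) |>.trans
      (le_of_eq (by ring))
  have hna : n ^ a ≤ 2 ^ (a * n) := by
    calc n ^ a ≤ (2 ^ n) ^ a := Nat.pow_le_pow_left (Nat.lt_two_pow_self (n := n)).le a
      _ = 2 ^ (a * n) := by rw [← pow_mul, mul_comm]
  have hK' : (2 * M) ^ n < 2 ^ K := by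
    have h1 : 2 * M < 2 ^ (2 + a * n) := by
      have : 2 ^ (2 + a * n) = 4 * 2 ^ (a * n) := by rw [pow_add]; norm_num
      omega
    calc (2 * M) ^ n < (2 ^ (2 + a * n)) ^ n := Nat.pow_lt_pow_left h1 (by omega)
      _ = 2 ^ K := by rw [← pow_mul, hK, mul_comm]
  -- D
  have hD : 2 ^ M - 2 ^ (M - n) = 2 ^ (M - n) * (2 ^ n - 1) := by
    rw [Nat.mul_sub, mul_one, ← pow_add]
    congr 2
    omega
  have hDpos : 0 < 2 ^ (M - n) * (2 ^ n - 1) := by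
    have : (1:ℕ) ≤ 2 ^ n - 1 := by
      have := Nat.one_lt_two_pow (n := n) (by omega)
      omega
    positivity
  have hC := auxC (2 ^ n) K Nat.one_le_two_pow
  calc (Nat.choose M n * 2 ^ n) * (2 ^ M - 2 ^ (M - n)) ^ N
      < 2 ^ K * (2 ^ M - 2 ^ (M - n)) ^ N := by
        rw [hD]
        exact (Nat.mul_lt_mul_right (pow_pos hDpos N)).mpr (lt_of_le_of_lt hQ hK')
    _ = (2 ^ (M - n)) ^ N * (2 ^ K * (2 ^ n - 1) ^ (2 ^ n * K)) := by
        rw [hD, mul_pow, hN]; ring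
    _ ≤ (2 ^ (M - n)) ^ N * (2 ^ n) ^ (2 ^ n * K) := Nat.mul_le_mul_left _ hC
    _ = 2 ^ ((M - n) * N + n * N) := by
        rw [pow_add, ← pow_mul, ← pow_mul, hN]
    _ = 2 ^ (M * N) := by
        congr 1
        have h : (M - n) + n = M := by omega
        calc (M - n) * N + n * N = ((M - n) + n) * N := by ring
          _ = M * N := by rw [h]



lemma count_match (M : ℕ) (S : Finset (Fin M)) (b : Fin M → Bool) :
    (Finset.univ.filter (fun f : Fin M → Bool => ∀ j ∈ S, f j = b j)).card
      = 2 ^ (M - S.card) := by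
  have he : (Finset.univ.filter (fun f : Fin M → Bool => ∀ j ∈ S, f j = b j))
      = Fintype.piFinset (fun j => if j ∈ S then ({b j} : Finset Bool) else Finset.univ) := by
    ext f
    simp only [mem_filter, mem_univ, true_and, Fintype.mem_piFinset]
    constructor
    · intro h j
      by_cases hj : j ∈ S
      · simp [hj, h j hj]
      · simp [hj]
    · intro h j hj
      have := h j
      rw [if_pos hj] at this
      simpa using this
  rw [he, Fintype.card_piFinset]
  have : ∀ j : Fin M, (if j ∈ S then ({b j} : Finset Bool) else Finset.univ).card
      = if j ∈ S then 1 else 2 := by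
    intro j; by_cases hj : j ∈ S <;> simp [hj]
  rw [Finset.prod_congr rfl (fun j _ => this j), Finset.prod_ite, Finset.prod_const_one,
    Finset.prod_const, one_mul]
  congr 1
  rw [Finset.filter_not, Finset.card_sdiff_of_subset (Finset.filter_subset _ _), Finset.filter_univ_mem,
    Finset.card_univ, Fintype.card_fin]

lemma exists_universal (M n N : ℕ)
    (h : (Nat.choose M n * 2 ^ n) * (2 ^ M - 2 ^ (M - n)) ^ N < 2 ^ (M * N)) :
    ∃ t : Fin N → Fin M → Bool,
      ∀ S : Finset (Fin M), S.card = n → ∀ φ : Fin M → Bool,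
        ∃ i : Fin N, ∀ j ∈ S, t i j = φ j := by
  by_contra hc
  push_neg at hc
  -- every tuple is "bad"
  set Q : Finset (Σ _ : Finset (Fin M), Finset (Fin M)) :=
    (Finset.univ.filter (fun S : Finset (Fin M) => S.card = n)).sigma (fun S => S.powerset)
    with hQdef
  set g : (Σ _ : Finset (Fin M), Finset (Fin M)) → Finset (Fin N → Fin M → Bool) :=
    fun p => Fintype.piFinset (fun _ : Fin N =>
      Finset.univ.filter (fun f : Fin M → Bool => ¬ ∀ j ∈ p.1, f j = decide (j ∈ p.2)))
    with hgdef
  have hsub : (Finset.univ : Finset (Fin N → Fin M → Bool)) ⊆ Q.biUnion g := by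
    intro t _
    obtain ⟨S, hS, φ, hfail⟩ := hc t
    refine Finset.mem_biUnion.mpr ⟨⟨S, S.filter (fun j => φ j = true)⟩, ?_, ?_⟩
    · rw [hQdef, Finset.mem_sigma]
      exact ⟨by simp [hS], Finset.mem_powerset.mpr (Finset.filter_subset _ _)⟩
    · rw [hgdef, Fintype.mem_piFinset]
      intro i
      simp only [mem_filter, mem_univ, true_and]
      intro hall
      obtain ⟨j, hj, hne⟩ := hfail i
      have := hall j hj
      have hd : decide (j ∈ S ∧ φ j = true) = φ j := by
        by_cases hφ : φ j = true <;> simp [hj, hφ]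
      rw [hd] at this
      exact hne this
  have hcard : (2 : ℕ) ^ (M * N) ≤ Q.card * (2 ^ M - 2 ^ (M - n)) ^ N := by
    have h1 : (Finset.univ : Finset (Fin N → Fin M → Bool)).card = 2 ^ (M * N) := by
      simp [Finset.card_univ, ← pow_mul]
    calc (2:ℕ) ^ (M * N) = (Finset.univ : Finset (Fin N → Fin M → Bool)).card := h1.symm
      _ ≤ (Q.biUnion g).card := Finset.card_le_card hsub
      _ ≤ ∑ p ∈ Q, (g p).card := Finset.card_biUnion_le
      _ ≤ ∑ _p ∈ Q, (2 ^ M - 2 ^ (M - n)) ^ N := by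
          apply Finset.sum_le_sum
          intro p hp
          rw [hQdef, Finset.mem_sigma, Finset.mem_filter] at hp
          have hpS : p.1.card = n := hp.1.2
          rw [hgdef]
          rw [Fintype.card_piFinset_const]
          apply Nat.pow_le_pow_left
          have : (Finset.univ.filter
              (fun f : Fin M → Bool => ¬ ∀ j ∈ p.1, f j = decide (j ∈ p.2)))
              = Finset.univ \ (Finset.univ.filter
                (fun f : Fin M → Bool => ∀ j ∈ p.1, f j = decide (j ∈ p.2))) := by
            rw [← Finset.filter_not]
          rw [this, Finset.card_sdiff_of_subset (Finset.filter_subset _ _), count_match, hpS]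
          simp [Finset.card_univ]
      _ = Q.card * (2 ^ M - 2 ^ (M - n)) ^ N := by rw [Finset.sum_const, smul_eq_mul]
  have hQcard : Q.card = Nat.choose M n * 2 ^ n := by
    rw [hQdef, Finset.card_sigma]
    have : ∀ S ∈ Finset.univ.filter (fun S : Finset (Fin M) => S.card = n),
        S.powerset.card = 2 ^ n := by
      intro S hS
      rw [Finset.mem_filter] at hS
      rw [Finset.card_powerset, hS.2]
    rw [Finset.sum_congr rfl this, Finset.sum_const, smul_eq_mul]
    congr 1
    rw [← Finset.powerset_univ, ← Finset.powersetCard_eq_filter, Finset.card_powersetCard,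
      Finset.card_univ, Fintype.card_fin]
  rw [hQcard] at hcard
  omega


lemma gcb_size_bound (a n : ℕ) (ha : 1 ≤ a) (hn : 2 ≤ n) :
    2 ^ n * (n * (2 + a * n)) ≤ 2 ^ (4 * a * n) := by
  have h1 : n ≤ 2 ^ n := (Nat.lt_two_pow_self (n := n)).le
  have h2 : 2 + a * n ≤ 2 ^ (2 + a * n) := Nat.lt_two_pow_self.le
  calc 2 ^ n * (n * (2 + a * n)) ≤ 2 ^ n * (2 ^ n * 2 ^ (2 + a * n)) :=
        Nat.mul_le_mul_left _ (Nat.mul_le_mul h1 h2)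
    _ = 2 ^ (n + (n + (2 + a * n))) := by rw [← pow_add, ← pow_add]
    _ ≤ 2 ^ (4 * a * n) := by
        apply Nat.pow_le_pow_right (by omega)
        have hn' : n ≤ a * n := Nat.le_mul_of_pos_left n (by omega)
        have hp : 2 ≤ a * n := le_trans hn hn'
        have h4 : 4 * a * n = 4 * (a * n) := by ring
        omega

/-- When the identifier range is polynomial, `M = n^a`, bipartiteness has a global
certification scheme of size `O(n)` (with the constant depending linearly on `a`),
refuting the conjecture that `Θ(n log n)` is optimal. -/
theorem global_certification_bipartiteness_poly_ids :
    ∃ c₀ : ℝ, 0 < c₀ ∧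
      ∀ (a : ℕ), 1 ≤ a → ∀ (n : ℕ), 2 ≤ n → ∀ (M : ℕ), M = n ^ a →
        ∃ (C : Type) (instC : Fintype C) (A : Fin M → Finset (Fin M) → C → Bool),
          (@Fintype.card C instC : ℝ) ≤ 2 ^ (c₀ * (a : ℝ) * (n : ℝ)) ∧
          ∀ (V : Type) [Fintype V] [DecidableEq V] (G : SimpleGraph V) [DecidableRel G.Adj],
            Fintype.card V = n →
            ∀ Id : V → Fin M, Function.Injective Id →
              ((∃ c : C, ∀ u : V, A (Id u) ((G.neighborFinset u).image Id) c = true) ↔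
                ∃ φ : V → Fin 2, ∀ u v : V, G.Adj u v → φ u ≠ φ v) := by
  refine ⟨4, by norm_num, ?_⟩
  intro a ha n hn M hM
  subst hM
  set N := 2 ^ n * (n * (2 + a * n)) with hNdef
  obtain ⟨t, ht⟩ := exists_universal (n ^ a) n N (numeric a n ha hn)
  refine ⟨Fin N, inferInstance, fun i S c => decide (∀ j ∈ S, t c j ≠ t c i), ?_, ?_⟩
  · rw [Fintype.card_fin]
    have hN : N ≤ 2 ^ (4 * a * n) := gcb_size_bound a n ha hn
    have hexp : ((4 : ℝ) * (a : ℝ) * (n : ℝ)) = ((4 * a * n : ℕ) : ℝ) := by push_cast; ring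
    rw [hexp, Real.rpow_natCast]
    exact_mod_cast hN
  · intro V _ _ G _ hV Id hId
    constructor
    · rintro ⟨c, hc⟩
      refine ⟨fun u => if t c (Id u) = true then 1 else 0, fun u v huv => ?_⟩
      have h1 := hc u
      rw [decide_eq_true_eq] at h1
      have hv : Id v ∈ (G.neighborFinset u).image Id :=
        Finset.mem_image_of_mem _ ((SimpleGraph.mem_neighborFinset _ _ _).mpr huv)
      have h2 := h1 _ hv
      by_cases hb : t c (Id u) = true <;> by_cases hb' : t c (Id v) = true <;> simp_all
    · rintro ⟨φ, hφ⟩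
      obtain ⟨i, hi⟩ := ht (Finset.univ.image Id)
        (by rw [Finset.card_image_of_injective _ hId, Finset.card_univ, hV])
        (fun m => decide (∃ u, Id u = m ∧ φ u = 1))
      refine ⟨i, fun u => ?_⟩
      rw [decide_eq_true_eq]
      intro j hj
      obtain ⟨v, hvmem, rfl⟩ := Finset.mem_image.mp hj
      have huv : G.Adj u v := (SimpleGraph.mem_neighborFinset _ _ _).mp hvmem
      have h1 : t i (Id v) = decide (∃ w, Id w = Id v ∧ φ w = 1) :=
        hi _ (Finset.mem_image_of_mem _ (Finset.mem_univ v))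
      have h2 : t i (Id u) = decide (∃ w, Id w = Id u ∧ φ w = 1) :=
        hi _ (Finset.mem_image_of_mem _ (Finset.mem_univ u))
      have e1 : (∃ w, Id w = Id v ∧ φ w = 1) ↔ φ v = 1 :=
        ⟨fun ⟨w, hw, hw1⟩ => by rwa [hId hw] at hw1, fun h => ⟨v, rfl, h⟩⟩
      have e2 : (∃ w, Id w = Id u ∧ φ w = 1) ↔ φ u = 1 :=
        ⟨fun ⟨w, hw, hw1⟩ => by rwa [hId hw] at hw1, fun h => ⟨u, rfl, h⟩⟩
      rw [h1, h2, decide_eq_decide.mpr e1, decide_eq_decide.mpr e2]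
      have hne : φ u ≠ φ v := hφ u v huv
      have key : ∀ x y : Fin 2, x ≠ y → decide (y = 1) ≠ decide (x = 1) := by decide
      exact key _ _ hne
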